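/- For any loop ℓ (a non-backtracking walk of length at least 2 starting and ending at the same directed edge), one has λ(ℓ) = λ(ℓ⁻¹), and λ(ℓ) ∈ {x(ℓ), −x(ℓ)}. -/

import Mathlib

open scoped BigOperators

/-- The straight line segment drawn for an (unordered) edge, given the
positions of the vertices in the complex plane. -/
def segOf {α : Type*} (pos : α → ℂ) : Sym2 α → Set ℂ :=
  Sym2.lift ⟨fun u v => segment ℝ (pos u) (pos v), fun u v => segment_symm ℝ (pos u) (pos v)⟩

/-- A finite graph embedded in the complex plane: vertices are distinct points
of `ℂ`, edges are unordered pairs of distinct vertices drawn as straight line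
segments which pairwise intersect only at common endpoints, and no vertex lies
on an edge which does not contain it. -/
structure PlaneGraph where
  V : Type
  fintypeV : Fintype V
  decEqV : DecidableEq V
  pos : V → ℂ
  pos_inj : Function.Injective pos
  E : Finset (Sym2 V)
  not_diag : ∀ e ∈ E, ¬ e.IsDiag
  edges_meet : ∀ e₁ ∈ E, ∀ e₂ ∈ E, e₁ ≠ e₂ → ∀ p : ℂ,
    p ∈ segOf pos e₁ → p ∈ segOf pos e₂ → ∃ w : V, w ∈ e₁ ∧ w ∈ e₂ ∧ p = pos w
  vertex_on_edge : ∀ e ∈ E, ∀ w : V, pos w ∈ segOf pos e → w ∈ e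

attribute [instance] PlaneGraph.fintypeV PlaneGraph.decEqV

namespace PlaneGraph

variable (G : PlaneGraph)

/-- A directed edge: an ordered pair of vertices whose underlying
unordered pair is an edge of the graph. -/
abbrev DEdge : Type := {p : G.V × G.V // s(p.1, p.2) ∈ G.E}

/-- The reversal `-e` of a directed edge. -/
def rev (e : G.DEdge) : G.DEdge :=
  ⟨(e.val.2, e.val.1), by rw [Sym2.eq_swap]; exact e.property⟩

/-- The undirected version `ē` of a directed edge. -/
def undir (e : G.DEdge) : Sym2 G.V := s(e.val.1, e.val.2)

/-- The turning angle `∠(e,g) = Arg((h_g - t_g)/(h_e - t_e)) ∈ (-π, π]`. -/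
noncomputable def tangle (e g : G.DEdge) : ℝ :=
  Complex.arg ((G.pos g.val.2 - G.pos g.val.1) / (G.pos e.val.2 - G.pos e.val.1))

/-- The Kac–Ward transition matrix `Λ`, indexed by directed edges. -/
noncomputable def transMatrix (x : Sym2 G.V → ℝ) : Matrix G.DEdge G.DEdge ℂ :=
  fun e g =>
    if e.val.2 = g.val.1 ∧ g ≠ G.rev e then
      (x (G.undir e) : ℂ) * Complex.exp (Complex.I / 2 * (G.tangle e g : ℂ))
    else 0

/-- A non-backtracking walk of length `n ≥ 1`, encoded as the list
`(w₁, …, w_{n+1})` of its `n+1` directed edges: consecutive edges are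
incident head-to-tail and the walk never immediately reverses an edge. -/
def IsWalk (l : List G.DEdge) : Prop :=
  2 ≤ l.length ∧ l.Chain' (fun e g => e.val.2 = g.val.1 ∧ g ≠ G.rev e)

/-- The length `|w|` (number of steps) of a walk given as a list of edges. -/
def len (l : List G.DEdge) : ℕ := l.length - 1

/-- The weight `λ(w) = ∏_{i=1}^{n} Λ_{w_i, w_{i+1}}` of a walk. -/
noncomputable def wlam (x : Sym2 G.V → ℝ) (l : List G.DEdge) : ℂ :=
  (List.zipWith (fun e g => G.transMatrix x e g) l l.tail).prod

/-- The edge weight `x(w) = ∏_{i=1}^{n} x_{\bar{w_i}}` of a walk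
(the weight of the last edge is not included). -/
def wx (x : Sym2 G.V → ℝ) (l : List G.DEdge) : ℝ :=
  (l.dropLast.map (fun e => x (G.undir e))).prod

/-- The total turning angle `α(w) = Σ_{i=1}^{n} ∠(w_i, w_{i+1})` of a walk. -/
noncomputable def walpha (l : List G.DEdge) : ℝ :=
  (List.zipWith (fun e g => G.tangle e g) l l.tail).sum

/-- The reversal `w⁻¹ = (-w_{n+1}, …, -w₁)` of a walk. -/
def wrev (l : List G.DEdge) : List G.DEdge := (l.map G.rev).reverse

/-- The concatenation `w ⊕ w'` of two walks, the first ending with the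
directed edge with which the second starts. -/
def wconcat (l l' : List G.DEdge) : List G.DEdge := l ++ l'.tail

/-- A (rooted) loop: a walk of length at least `2` which starts and ends
with the same directed edge. -/
def IsLoop (l : List G.DEdge) : Prop :=
  G.IsWalk l ∧ 3 ≤ l.length ∧ l.head? = l.getLast?

/-- The number of times a loop `ℓ = (ℓ₁, …, ℓ_{n+1})` visits a directed
edge `e`, i.e. the number of occurrences of `e` among `ℓ₁, …, ℓ_n`. -/
def visits (l : List G.DEdge) (e : G.DEdge) : ℕ := l.dropLast.count e

/-- A loop `ℓ` of length `n` is self-avoiding if each vertex appearing in it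
appears in exactly two of the directed edges `ℓ₁, …, ℓ_n`. -/
def SelfAvoiding (l : List G.DEdge) : Prop :=
  G.IsLoop l ∧ ∀ v : G.V,
    l.dropLast.countP (fun e => decide (v = e.val.1 ∨ v = e.val.2)) ≠ 0 →
    l.dropLast.countP (fun e => decide (v = e.val.1 ∨ v = e.val.2)) = 2

/-- The degree of a vertex: the number of edges containing it. -/
def degV (v : G.V) : ℕ := (G.E.filter (fun e => v ∈ e)).card

/-- A finite set of edges is even if every vertex belongs to an even number
of its edges. -/
def IsEvenSet (H : Finset (Sym2 G.V)) : Prop :=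
  ∀ v : G.V, Even ((H.filter (fun e => v ∈ e)).card)

instance : DecidablePred G.IsEvenSet := fun H =>
  decidable_of_iff (∀ v : G.V, Even ((H.filter (fun e => v ∈ e)).card)) Iff.rfl

/-- The generating function `Z = Σ_{H even} ∏_{ē ∈ H} x_ē` of even
subgraphs. -/
def Z (x : Sym2 G.V → ℝ) : ℝ :=
  ∑ H ∈ G.E.powerset.filter G.IsEvenSet, ∏ e ∈ H, x e

end PlaneGraph

namespace PlaneGraph

variable (G : PlaneGraph)

/-- The step relation along a non-backtracking walk. -/
def Step (e g : G.DEdge) : Prop := e.val.2 = g.val.1 ∧ g ≠ G.rev e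

/-- The direction vector of a directed edge. -/
def dvec (e : G.DEdge) : ℂ := G.pos e.val.2 - G.pos e.val.1

lemma fst_ne_snd (e : G.DEdge) : e.val.1 ≠ e.val.2 := fun h =>
  G.not_diag _ e.property (Sym2.mk_isDiag_iff.mpr h)

lemma dvec_ne_zero (e : G.DEdge) : G.dvec e ≠ 0 :=
  sub_ne_zero.mpr fun h => G.fst_ne_snd e (G.pos_inj h).symm

lemma rev_rev (e : G.DEdge) : G.rev (G.rev e) = e := rfl

lemma undir_rev (e : G.DEdge) : G.undir (G.rev e) = G.undir e := Sym2.eq_swap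

lemma segOf_undir (e : G.DEdge) :
    segOf G.pos (G.undir e) = segment ℝ (G.pos e.val.1) (G.pos e.val.2) := rfl

lemma tangle_eq (e g : G.DEdge) : G.tangle e g = Complex.arg (G.dvec g / G.dvec e) := rfl

/-- Along a step of a walk, two consecutive edges are never antiparallel. -/
lemma arg_ne_pi (e g : G.DEdge) (h1 : e.val.2 = g.val.1) (h2 : g ≠ G.rev e) :
    Complex.arg (G.dvec g / G.dvec e) ≠ Real.pi := by
  intro hpi
  rw [Complex.arg_eq_pi_iff] at hpi
  obtain ⟨hre, him⟩ := hpi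
  set r : ℝ := (G.dvec g / G.dvec e).re with hrdef
  have hrg : G.dvec g = (r : ℂ) * G.dvec e := by
    have h0 : G.dvec g / G.dvec e = (r : ℂ) := by
      apply Complex.ext
      · simp [hrdef]
      · simp [him]
    rw [div_eq_iff (G.dvec_ne_zero e)] at h0
    exact h0
  -- The two unordered edges are distinct
  have hEne : G.undir e ≠ G.undir g := by
    intro hEq
    rcases Sym2.eq_iff.mp hEq with ⟨ha, hb⟩ | ⟨ha, hb⟩
    · exact G.fst_ne_snd e (ha.trans h1.symm)
    · exact h2 (Subtype.ext (Prod.ext hb.symm ha.symm))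
  set c : ℝ := -r with hcdef
  have hc : 0 < c := by simpa [hcdef] using hre
  set T : ℝ := min 1 (1 / c) with hTdef
  have hT : 0 < T := lt_min one_pos (by positivity)
  set p : ℝ → ℂ := fun t => G.pos g.val.1 + (t : ℂ) * G.dvec g with hpdef
  have hpg : ∀ t ∈ Set.Icc (0 : ℝ) T, p t ∈ segOf G.pos (G.undir g) := by
    intro t ht
    rw [G.segOf_undir, segment_eq_image']
    exact ⟨t, ⟨ht.1, le_trans ht.2 (min_le_left _ _)⟩, by
      simp [hpdef, Complex.real_smul, dvec]⟩
  have hpe : ∀ t ∈ Set.Icc (0 : ℝ) T, p t ∈ segOf G.pos (G.undir e) := by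
    intro t ht
    rw [G.segOf_undir, segment_eq_image']
    refine ⟨1 - t * c, ⟨?_, ?_⟩, ?_⟩
    · have htc : t * c ≤ 1 := by
        calc t * c ≤ (1 / c) * c := by
              apply mul_le_mul_of_nonneg_right _ hc.le
              exact le_trans ht.2 (min_le_right _ _)
          _ = 1 := by field_simp
      linarith
    · nlinarith [ht.1, hc.le, mul_nonneg ht.1 hc.le]
    · have hg1 : G.pos g.val.1 = G.pos e.val.2 := by rw [h1]
      have hrc : (r : ℂ) = -(c : ℂ) := by
        push_cast [hcdef]; ring
      simp only [hpdef, Complex.real_smul, hrg, hrc]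
      rw [hg1]
      show G.pos e.val.1 + ((1 : ℝ) - t * c : ℝ) * (G.pos e.val.2 - G.pos e.val.1)
          = G.pos e.val.2 + (t : ℂ) * (-(c : ℂ) * G.dvec e)
      simp only [dvec]
      push_cast
      ring
  -- Infinitely many intersection points, but finitely many vertices
  haveI : Infinite (Set.Icc (0 : ℝ) T) := Set.Icc.infinite hT
  have hmeet : ∀ t : Set.Icc (0 : ℝ) T, ∃ w : G.V, p t.val = G.pos w := by
    intro t
    obtain ⟨w, _, _, hw⟩ := G.edges_meet (G.undir e) e.property (G.undir g) g.property
      hEne (p t.val) (hpe t.val t.property) (hpg t.val t.property)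
    exact ⟨w, hw⟩
  choose f hf using hmeet
  obtain ⟨t, s, hts, hfts⟩ := Finite.exists_ne_map_eq_of_infinite f
  apply hts
  have hps : p t.val = p s.val := by rw [hf t, hf s, hfts]
  simp only [hpdef, add_right_inj] at hps
  have : (t.val : ℂ) = (s.val : ℂ) :=
    mul_right_cancel₀ (hrg ▸ G.dvec_ne_zero g) hps
  exact Subtype.ext (by exact_mod_cast this)

lemma tangle_rev (e g : G.DEdge) (h1 : e.val.2 = g.val.1) (h2 : g ≠ G.rev e) :
    G.tangle (G.rev g) (G.rev e) = - G.tangle e g := by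
  have key : G.dvec (G.rev e) / G.dvec (G.rev g) = (G.dvec g / G.dvec e)⁻¹ := by
    have hrevE : G.dvec (G.rev e) = -G.dvec e := by simp [dvec, rev]
    have hrevG : G.dvec (G.rev g) = -G.dvec g := by simp [dvec, rev]
    rw [hrevE, hrevG, neg_div_neg_eq, inv_div]
  rw [G.tangle_eq (G.rev g) (G.rev e), G.tangle_eq e g, key, Complex.arg_inv,
    if_neg (G.arg_ne_pi e g h1 h2)]

lemma wlam_cons_cons (x : Sym2 G.V → ℝ) (e g : G.DEdge) (t : List G.DEdge) :
    G.wlam x (e :: g :: t) = G.transMatrix x e g * G.wlam x (g :: t) := by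
  simp [wlam]

lemma wx_cons_cons (x : Sym2 G.V → ℝ) (e g : G.DEdge) (t : List G.DEdge) :
    G.wx x (e :: g :: t) = x (G.undir e) * G.wx x (g :: t) := by
  simp [wx]

lemma walpha_cons_cons (e g : G.DEdge) (t : List G.DEdge) :
    G.walpha (e :: g :: t) = G.tangle e g + G.walpha (g :: t) := by
  simp [walpha]

lemma wlam_eq_exp (x : Sym2 G.V → ℝ) :
    ∀ l : List G.DEdge, l.Chain' (fun e g => e.val.2 = g.val.1 ∧ g ≠ G.rev e) →
      G.wlam x l = ((G.wx x l : ℝ) : ℂ) *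
        Complex.exp (Complex.I / 2 * ((G.walpha l : ℝ) : ℂ))
  | [], _ => by simp [wlam, wx, walpha]
  | [e], _ => by simp [wlam, wx, walpha]
  | e :: g :: t, h => by
    obtain ⟨hstep, htail⟩ := List.isChain_cons_cons.mp h
    have ih := wlam_eq_exp x (g :: t) htail
    rw [G.wlam_cons_cons, G.wx_cons_cons, G.walpha_cons_cons, ih]
    rw [transMatrix, if_pos hstep]
    push_cast
    rw [mul_add, Complex.exp_add]
    ring

lemma exp_walpha :
    ∀ (l : List G.DEdge), l.Chain' (fun e g => e.val.2 = g.val.1 ∧ g ≠ G.rev e) →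
      ∀ (hne : l ≠ []),
      Complex.exp (Complex.I * ((G.walpha l : ℝ) : ℂ)) *
          (G.dvec (l.head hne) * ((‖G.dvec (l.getLast hne)‖ : ℝ) : ℂ))
        = G.dvec (l.getLast hne) * ((‖G.dvec (l.head hne)‖ : ℝ) : ℂ)
  | [], _, hne => absurd rfl hne
  | [e], _, _ => by simp [walpha]
  | e :: g :: t, h, _ => by
    obtain ⟨hstep, htail⟩ := List.isChain_cons_cons.mp h
    have ih := exp_walpha (g :: t) htail (List.cons_ne_nil _ _)
    have hlast : (e :: g :: t).getLast (List.cons_ne_nil _ _)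
        = (g :: t).getLast (List.cons_ne_nil _ _) := List.getLast_cons _
    have hhead : (e :: g :: t).head (List.cons_ne_nil _ _) = e := rfl
    have hhead2 : (g :: t).head (List.cons_ne_nil _ _) = g := rfl
    rw [hhead2] at ih
    rw [hlast, hhead, G.walpha_cons_cons]
    -- single step: exp(I * tangle e g) * (dvec e * |dvec g|) = dvec g * |dvec e|
    have hr : G.dvec g / G.dvec e ≠ 0 :=
      div_ne_zero (G.dvec_ne_zero g) (G.dvec_ne_zero e)
    have step : Complex.exp (Complex.I * ((G.tangle e g : ℝ) : ℂ)) *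
        (G.dvec e * ((‖G.dvec g‖ : ℝ) : ℂ))
        = G.dvec g * ((‖G.dvec e‖ : ℝ) : ℂ) := by
      have h0 := Complex.norm_mul_exp_arg_mul_I (G.dvec g / G.dvec e)
      rw [G.tangle_eq]
      rw [norm_div, Complex.ofReal_div] at h0
      have he0 : ((‖G.dvec e‖ : ℝ) : ℂ) ≠ 0 := by
        exact_mod_cast (norm_ne_zero_iff.mpr (G.dvec_ne_zero e))
      have he1 : G.dvec e ≠ 0 := G.dvec_ne_zero e
      field_simp at h0
      rw [mul_comm Complex.I _]
      linear_combination h0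
    set a := Complex.exp (Complex.I * ((G.tangle e g : ℝ) : ℂ)) with ha
    set b := Complex.exp (Complex.I * ((G.walpha (g :: t) : ℝ) : ℂ)) with hb
    have hab : Complex.exp (Complex.I * ((G.tangle e g + G.walpha (g :: t) : ℝ) : ℂ))
        = a * b := by
      rw [ha, hb, ← Complex.exp_add]
      push_cast
      ring_nf
    rw [hab]
    set dl := G.dvec ((g :: t).getLast (List.cons_ne_nil _ _)) with hdl
    have hg0 : G.dvec g ≠ 0 := G.dvec_ne_zero g
    have hag0 : ((‖G.dvec g‖ : ℝ) : ℂ) ≠ 0 := by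
      exact_mod_cast (norm_ne_zero_iff.mpr hg0)
    apply mul_left_cancel₀ (mul_ne_zero hg0 hag0)
    linear_combination (b * G.dvec g * ((‖dl‖ : ℝ) : ℂ)) * step +
      (G.dvec g * ((‖G.dvec e‖ : ℝ) : ℂ)) * ih

lemma exp_walpha_loop (l : List G.DEdge) (hl : G.IsLoop l) :
    Complex.exp (Complex.I / 2 * ((G.walpha l : ℝ) : ℂ)) = 1 ∨
      Complex.exp (Complex.I / 2 * ((G.walpha l : ℝ) : ℂ)) = -1 := by
  obtain ⟨⟨hlen2, hchain⟩, hlen3, hheads⟩ := hl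
  have hne : l ≠ [] := by
    intro h; rw [h] at hlen3; simp at hlen3
  have hhl : l.head hne = l.getLast hne := by
    have h1 := List.head?_eq_head hne
    have h2 := List.getLast?_eq_getLast_of_ne_nil hne
    rw [h1, h2] at hheads
    exact Option.some_injective _ hheads
  have key := G.exp_walpha l hchain hne
  rw [hhl] at key
  have hd0 : G.dvec (l.getLast hne) * ((‖G.dvec (l.getLast hne)‖ : ℝ) : ℂ) ≠ 0 := by
    apply mul_ne_zero (G.dvec_ne_zero _)
    exact_mod_cast (norm_ne_zero_iff.mpr (G.dvec_ne_zero _))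
  have hexp1 : Complex.exp (Complex.I * ((G.walpha l : ℝ) : ℂ)) = 1 := by
    have := key
    rw [← one_mul (G.dvec (l.getLast hne) * _)] at this
    exact mul_right_cancel₀ hd0 (by linear_combination key)
  have hsq : Complex.exp (Complex.I / 2 * ((G.walpha l : ℝ) : ℂ)) ^ 2 = 1 := by
    rw [sq, ← Complex.exp_add, show Complex.I / 2 * ((G.walpha l : ℝ) : ℂ) +
      Complex.I / 2 * ((G.walpha l : ℝ) : ℂ) = Complex.I * ((G.walpha l : ℝ) : ℂ) by ring]
    exact hexp1
  exact sq_eq_one_iff.mp hsq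

lemma chain'_wrev (l : List G.DEdge)
    (h : l.Chain' (fun e g => e.val.2 = g.val.1 ∧ g ≠ G.rev e)) :
    (G.wrev l).Chain' (fun e g => e.val.2 = g.val.1 ∧ g ≠ G.rev e) := by
  unfold List.Chain' at h ⊢
  rw [wrev, List.isChain_reverse, List.isChain_map]
  refine h.imp fun a b hab => ⟨?_, ?_⟩
  · show (G.rev b).val.2 = (G.rev a).val.1
    exact hab.1.symm
  · show G.rev a ≠ G.rev (G.rev b)
    rw [G.rev_rev]
    intro hEq
    exact hab.2 hEq.symm

lemma walpha_append_single :
    ∀ (L : List G.DEdge) (hL : L ≠ []) (a : G.DEdge),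
      G.walpha (L ++ [a]) = G.walpha L + G.tangle (L.getLast hL) a
  | [], hL, _ => absurd rfl hL
  | [b], _, a => by simp [walpha]
  | b :: c :: t, _, a => by
    have ih := walpha_append_single (c :: t) (List.cons_ne_nil _ _) a
    have h1 : (b :: c :: t) ++ [a] = b :: ((c :: t) ++ [a]) := by simp
    have h2 : (c :: t) ++ [a] = c :: (t ++ [a]) := by simp
    rw [h1, h2, G.walpha_cons_cons, ← h2, ih, G.walpha_cons_cons,
      List.getLast_cons (List.cons_ne_nil _ _)]
    ring

lemma wrev_ne_nil (l : List G.DEdge) (h : l ≠ []) : G.wrev l ≠ [] := by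
  simp [wrev, h]

lemma walpha_wrev :
    ∀ (l : List G.DEdge), l.Chain' (fun e g => e.val.2 = g.val.1 ∧ g ≠ G.rev e) →
      G.walpha (G.wrev l) = - G.walpha l
  | [], _ => by simp [wrev, walpha]
  | [e], _ => by simp [wrev, walpha]
  | e :: g :: t, h => by
    obtain ⟨hstep, htail⟩ := List.isChain_cons_cons.mp h
    have ih := walpha_wrev (g :: t) htail
    have hw : G.wrev (e :: g :: t) = G.wrev (g :: t) ++ [G.rev e] := by
      simp [wrev]
    have hne : G.wrev (g :: t) ≠ [] := G.wrev_ne_nil _ (List.cons_ne_nil _ _)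
    have hlast : (G.wrev (g :: t)).getLast hne = G.rev g := by
      have h0 := List.getLast_reverse (l := ((g :: t).map G.rev)) hne
      exact h0
    rw [hw, G.walpha_append_single _ hne, hlast, ih,
      G.tangle_rev e g hstep.1 hstep.2, G.walpha_cons_cons]
    ring

lemma wx_wrev (x : Sym2 G.V → ℝ) (l : List G.DEdge) (hl : G.IsLoop l) :
    G.wx x (G.wrev l) = G.wx x l := by
  obtain ⟨⟨hlen2, hchain⟩, hlen3, hheads⟩ := hl
  have hne : l ≠ [] := by
    intro h; rw [h] at hlen3; simp at hlen3
  have hhl : l.head hne = l.getLast hne := by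
    have h1 := List.head?_eq_head hne
    have h2 := List.getLast?_eq_getLast_of_ne_nil hne
    rw [h1, h2] at hheads
    exact Option.some_injective _ hheads
  -- (wrev l).dropLast = ((l.map rev).tail).reverse
  have hdrop : (G.wrev l).dropLast = ((l.map G.rev).tail).reverse := by
    have h0 := List.tail_reverse (l := (l.map G.rev).reverse)
    rw [List.reverse_reverse] at h0
    rw [wrev, h0, List.reverse_reverse]
  have htailmap : (l.map G.rev).tail = l.tail.map G.rev := by
    cases l <;> simp
  -- products
  rw [wx, wx, hdrop, htailmap]
  have pA : ((l.tail.map G.rev).reverse.map (fun e => x (G.undir e))).Perm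
      ((l.tail.map G.rev).map (fun e => x (G.undir e))) :=
    ((l.tail.map G.rev).reverse_perm).map _
  rw [pA.prod_eq, List.map_map]
  have hcomp : ((fun e => x (G.undir e)) ∘ G.rev) = fun e => x (G.undir e) :=
    funext fun e => by simp only [Function.comp_apply, G.undir_rev]
  rw [hcomp]
  apply List.Perm.prod_eq
  apply List.Perm.map
  -- l.tail ~ l.dropLast
  have e1 : l.head hne :: l.tail = l := List.cons_head_tail hne
  have e2 : l.dropLast ++ [l.getLast hne] = l := List.dropLast_append_getLast hne
  have p1 : (l.dropLast ++ [l.getLast hne]).Perm (l.getLast hne :: l.dropLast) :=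
    List.perm_append_singleton _ _
  have p2 : (l.head hne :: l.tail).Perm (l.head hne :: l.dropLast) := by
    rw [e1]
    have := p1
    rw [e2] at this
    rw [hhl]
    exact this
  exact List.Perm.cons_inv p2

end PlaneGraph

/-- For any loop `ℓ`, `λ(ℓ) = λ(ℓ⁻¹)` and `λ(ℓ) = ± x(ℓ)`. -/
theorem wlam_loop (G : PlaneGraph) (x : Sym2 G.V → ℝ) (l : List G.DEdge)
    (hl : G.IsLoop l) :
    G.wlam x l = G.wlam x (G.wrev l) ∧
      (G.wlam x l = ((G.wx x l : ℝ) : ℂ) ∨ G.wlam x l = -((G.wx x l : ℝ) : ℂ)) := by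
  obtain ⟨⟨hlen2, hchain⟩, hlen3, hheads⟩ := hl
  have hA := G.wlam_eq_exp x l hchain
  have hz := G.exp_walpha_loop l ⟨⟨hlen2, hchain⟩, hlen3, hheads⟩
  have hchain' := G.chain'_wrev l hchain
  have hA' := G.wlam_eq_exp x (G.wrev l) hchain'
  have halpha := G.walpha_wrev l hchain
  have hwx := G.wx_wrev x l ⟨⟨hlen2, hchain⟩, hlen3, hheads⟩
  constructor
  · rw [hA, hA', hwx, halpha]
    congr 1
    have hneg : Complex.I / 2 * ((-G.walpha l : ℝ) : ℂ)
        = -(Complex.I / 2 * ((G.walpha l : ℝ) : ℂ)) := by push_cast; ring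
    rw [hneg, Complex.exp_neg]
    rcases hz with h | h <;> rw [h] <;> norm_num
  · rw [hA]
    rcases hz with h | h
    · left; rw [h, mul_one]
    · right; rw [h]; ring
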